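/- Let 1 < p < ∞ with conjugate exponent p', let X be a complex Banach space, let n ∈ ℕ, and let (Ω, m) be a measure space which contains pairwise disjoint measurable sets S_1,…,S_n with 0 < m(S_i) < ∞ for each i. Then for x = (x_1,…,x_n) ∈ X^n the following are equivalent: (a) μ_{p,n}(x) ≤ 1; (b) there exist a bounded linear operator U : L^{p'}(Ω,m) → X with ‖U‖ ≤ 1 and functions f_1,…,f_n ∈ L^{p'}(Ω,m) with ‖f_i‖_{p'} ≤ 1, with f_i·f_j = 0 almost everywhere whenever i ≠ j, and with x_i = U(f_i) for each i ∈ {1,…,n}. -/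

import Mathlib

open MeasureTheory NormedSpace Set
open scoped ENNReal NNReal

/-- The weak `p`-summing norm of an `n`-tuple in a normed space `F`. -/
noncomputable def muP {F : Type*} [NormedAddCommGroup F] [NormedSpace ℂ F]
    (p : ℝ) {n : ℕ} (y : Fin n → F) : ℝ :=
  sSup { c : ℝ | ∃ l : StrongDual ℂ F, ‖l‖ ≤ 1 ∧ c = (∑ i, ‖l (y i)‖ ^ p) ^ (1 / p) }


lemma muP_le_one_iff {F : Type*} [NormedAddCommGroup F] [NormedSpace ℂ F]
    {p : ℝ} (hp : 0 < p) {n : ℕ} (y : Fin n → F) :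
    muP p y ≤ 1 ↔ ∀ l : StrongDual ℂ F, ‖l‖ ≤ 1 →
      (∑ i, ‖l (y i)‖ ^ p) ^ (1 / p) ≤ 1 := by
  constructor
  · intro h l hl
    refine le_trans ?_ h
    apply le_csSup
    · refine ⟨(∑ i, ‖y i‖ ^ p) ^ (1 / p), ?_⟩
      rintro c ⟨l', hl', rfl⟩
      apply Real.rpow_le_rpow (Finset.sum_nonneg fun i _ => Real.rpow_nonneg (norm_nonneg _) _)
        (Finset.sum_le_sum fun i _ => ?_) (by positivity)
      apply Real.rpow_le_rpow (norm_nonneg _) ?_ hp.le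
      calc ‖l' (y i)‖ ≤ ‖l'‖ * ‖y i‖ := l'.le_opNorm _
      _ ≤ 1 * ‖y i‖ := by gcongr
      _ = ‖y i‖ := one_mul _
    · exact ⟨l, hl, rfl⟩
  · intro h
    apply Real.sSup_le _ zero_le_one
    rintro c ⟨l, hl, rfl⟩
    exact h l hl

lemma pointwise_disjoint_bound {n : ℕ} (v d : Fin n → ℂ) (r : ℝ) (hr : 0 < r)
    (hv : ∀ i j, i ≠ j → v i * v j = 0) :
    (‖∑ i, d i * v i‖₊ : ℝ≥0∞) ^ r ≤ ∑ i, ((‖d i‖₊ : ℝ≥0∞) * ‖v i‖₊) ^ r := by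
  by_cases h0 : ∀ i, v i = 0
  · simp [h0, ENNReal.zero_rpow_of_pos hr]
  · push_neg at h0
    obtain ⟨k, hk⟩ := h0
    have hz : ∀ j, j ≠ k → v j = 0 := by
      intro j hj
      have := hv k j (Ne.symm hj)
      rcases mul_eq_zero.1 this with h | h
      · exact absurd h hk
      · exact h
    have hsum : ∑ i, d i * v i = d k * v k := by
      apply Finset.sum_eq_single
      · intro j _ hj; rw [hz j hj, mul_zero]
      · simp
    rw [hsum]
    calc ((‖d k * v k‖₊ : ℝ≥0∞)) ^ r = ((‖d k‖₊ : ℝ≥0∞) * ‖v k‖₊) ^ r := by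
          rw [nnnorm_mul]; push_cast; ring_nf
      _ ≤ ∑ i, ((‖d i‖₊ : ℝ≥0∞) * ‖v i‖₊) ^ r :=
          Finset.single_le_sum (f := fun i => ((‖d i‖₊ : ℝ≥0∞) * ‖v i‖₊) ^ r) (fun i _ => zero_le) (Finset.mem_univ k)

lemma Lp_coeFn_sum {Ω : Type*} [MeasurableSpace Ω] {m : Measure Ω} {q : ℝ≥0∞}
    [Fact (1 ≤ q)] {n : ℕ} (f : Fin n → Lp ℂ q m) (s : Finset (Fin n)) :
    ⇑(∑ i ∈ s, f i) =ᵐ[m] fun t => ∑ i ∈ s, (f i : Ω → ℂ) t := by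
  induction s using Finset.induction_on with
  | empty => simp only [Finset.sum_empty]; exact Lp.coeFn_zero ℂ q m
  | insert _ _ hx ih =>
    rename_i a s'
    rw [Finset.sum_insert hx]
    filter_upwards [Lp.coeFn_add (f a) (∑ i ∈ s', f i), ih] with t h1 h2
    rw [h1]
    simp only [Pi.add_apply, h2, Finset.sum_insert hx]

lemma norm_disjoint_sum {Ω : Type*} [MeasurableSpace Ω] {m : Measure Ω} {q : ℝ≥0∞}
    [Fact (1 ≤ q)] (hq0 : q ≠ 0) (hqt : q ≠ ∞) {n : ℕ} (f : Fin n → Lp ℂ q m)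
    (hdisj : ∀ i j, i ≠ j → (fun t => (f i : Ω → ℂ) t * (f j : Ω → ℂ) t) =ᵐ[m] 0)
    (d : Fin n → ℂ) :
    ‖(∑ i, d i • f i : Lp ℂ q m)‖ ^ q.toReal ≤ ∑ i, ‖d i‖ ^ q.toReal * ‖f i‖ ^ q.toReal := by
  set r := q.toReal with hr_def
  have hr : 0 < r := ENNReal.toReal_pos hq0 hqt
  set g : Lp ℂ q m := ∑ i, d i • f i with hg
  have hgfn : ⇑g =ᵐ[m] fun t => ∑ i, d i * (f i : Ω → ℂ) t := by
    refine (Lp_coeFn_sum (fun i => d i • f i) Finset.univ).trans ?_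
    have : ∀ i : Fin n, ⇑(d i • f i) =ᵐ[m] fun t => d i * (f i : Ω → ℂ) t := fun i =>
      Lp.coeFn_smul (d i) (f i)
    filter_upwards [ae_all_iff.2 this] with t ht
    exact Finset.sum_congr rfl fun i _ => ht i
  -- a.e. pointwise disjointness
  have hae : ∀ᵐ t ∂m, ∀ i j, i ≠ j → (f i : Ω → ℂ) t * (f j : Ω → ℂ) t = 0 := by
    rw [ae_all_iff]
    intro i
    rw [ae_all_iff]
    intro j
    rw [ae_all_iff]
    intro hij
    filter_upwards [hdisj i j hij] with t ht using ht
  -- key lintegral bound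
  have hkey : (eLpNorm (⇑g) q m) ^ r ≤ ∑ i, (‖d i‖₊ : ℝ≥0∞) ^ r * (eLpNorm (⇑(f i)) q m) ^ r := by
    have hsn : ∀ h : Lp ℂ q m, (eLpNorm (⇑h) q m) ^ r = ∫⁻ t, (‖(h : Ω → ℂ) t‖₊ : ℝ≥0∞) ^ r ∂m := by
      intro h
      rw [eLpNorm_eq_lintegral_rpow_enorm_toReal hq0 hqt, ← ENNReal.rpow_mul, one_div,
        inv_mul_cancel₀ hr.ne', ENNReal.rpow_one]
      rfl
    rw [hsn]
    have step1 : ∫⁻ t, (‖(g : Ω → ℂ) t‖₊ : ℝ≥0∞) ^ r ∂m ≤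
        ∫⁻ t, ∑ i, ((‖d i‖₊ : ℝ≥0∞) * ‖(f i : Ω → ℂ) t‖₊) ^ r ∂m := by
      apply lintegral_mono_ae
      filter_upwards [hgfn, hae] with t h1 h2
      rw [h1]
      exact pointwise_disjoint_bound _ d r hr h2
    refine step1.trans ?_
    have hmeas : ∀ i : Fin n, AEMeasurable
        (fun t => ((‖d i‖₊ : ℝ≥0∞) * ‖(f i : Ω → ℂ) t‖₊) ^ r) m := by
      intro i
      exact (AEMeasurable.const_mul (Lp.aestronglyMeasurable (f i)).enorm _).pow_const r
    rw [lintegral_finset_sum' Finset.univ fun i _ => hmeas i]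
    apply le_of_eq
    refine Finset.sum_congr rfl fun i _ => ?_
    have : ∀ t, ((‖d i‖₊ : ℝ≥0∞) * ‖(f i : Ω → ℂ) t‖₊) ^ r
        = (‖d i‖₊ : ℝ≥0∞) ^ r * (‖(f i : Ω → ℂ) t‖₊ : ℝ≥0∞) ^ r := fun t =>
      ENNReal.mul_rpow_of_nonneg _ _ hr.le
    simp_rw [this]
    rw [lintegral_const_mul'' _ (show AEMeasurable (fun t => (‖(f i : Ω → ℂ) t‖₊ : ℝ≥0∞) ^ r) m from (Lp.aestronglyMeasurable (f i)).enorm.pow_const r), hsn]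
  -- convert to reals
  have hfin : (∑ i, (‖d i‖₊ : ℝ≥0∞) ^ r * (eLpNorm (⇑(f i)) q m) ^ r) ≠ ∞ := by
    refine (ENNReal.sum_lt_top.2 fun i _ => ?_).ne
    exact ENNReal.mul_lt_top (ENNReal.rpow_lt_top_of_nonneg hr.le ENNReal.coe_ne_top)
      (ENNReal.rpow_lt_top_of_nonneg hr.le (Lp.eLpNorm_ne_top (f i)))
  have := ENNReal.toReal_mono hfin hkey
  rw [← ENNReal.toReal_rpow] at this
  rw [Lp.norm_def]
  refine this.trans (le_of_eq ?_)
  rw [ENNReal.toReal_sum fun i _ => ?_]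
  · refine Finset.sum_congr rfl fun i _ => ?_
    rw [ENNReal.toReal_mul, ← ENNReal.toReal_rpow, ← ENNReal.toReal_rpow, ENNReal.coe_toReal,
      coe_nnnorm, Lp.norm_def]
  · exact (ENNReal.mul_lt_top (ENNReal.rpow_lt_top_of_nonneg hr.le ENNReal.coe_ne_top)
      (ENNReal.rpow_lt_top_of_nonneg hr.le (Lp.eLpNorm_ne_top (f i)))).ne


section Fwd
variable {Ω : Type*} [MeasurableSpace Ω] {m : Measure Ω}
  {p p' : ℝ} (hp : 1 < p) (hpp' : p.HolderConjugate p')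
  [Fact (1 ≤ ENNReal.ofReal p')]
  {X : Type*} [NormedAddCommGroup X] [NormedSpace ℂ X] [CompleteSpace X]
  {n : ℕ} {S : Fin n → Set Ω} (hSm : ∀ i, MeasurableSet (S i))
  (hSd : Pairwise (Function.onFun Disjoint S))
  (hS0 : ∀ i, 0 < m (S i)) (hSfin : ∀ i, m (S i) < ⊤)

include hpp' hSm hSd hS0 hSfin

-- key integral bound
lemma key_coef_bound (g : Lp ℂ (ENNReal.ofReal p') m) :
    ∑ i, ‖(((m (S i)).toReal ^ (-(1/p)) : ℝ) : ℂ) * ∫ t in S i, (g : Ω → ℂ) t ∂m‖ ^ p'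
      ≤ ‖g‖ ^ p' := by
  have hp'1 : 1 < p' := hpp'.symm.lt
  have hp'0 : 0 < p' := lt_trans one_pos hp'1
  have hq0 : ENNReal.ofReal p' ≠ 0 := by simp [ENNReal.ofReal_eq_zero, not_le, hp'0]
  have hqt : ENNReal.ofReal p' ≠ ∞ := ENNReal.ofReal_ne_top
  have hqr : (ENNReal.ofReal p').toReal = p' := ENNReal.toReal_ofReal hp'0.le
  have hmeas : AEMeasurable (fun t => (‖(g : Ω → ℂ) t‖₊ : ℝ≥0∞) ^ p') m :=
    (Lp.aestronglyMeasurable g).enorm.pow_const p'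
  -- termwise bound
  have hterm : ∀ i, ‖(((m (S i)).toReal ^ (-(1/p)) : ℝ) : ℂ) * ∫ t in S i, (g : Ω → ℂ) t ∂m‖ ^ p'
      ≤ (∫⁻ t in S i, (‖(g : Ω → ℂ) t‖₊ : ℝ≥0∞) ^ p' ∂m).toReal := by
    intro i
    have hSpos : 0 < (m (S i)).toReal := ENNReal.toReal_pos (hS0 i).ne' (hSfin i).ne
    -- bound the integral norm by eLpNorm 1
    have h1 : ‖∫ t in S i, (g : Ω → ℂ) t ∂m‖ ≤ (eLpNorm (⇑g) 1 (m.restrict (S i))).toReal := by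
      rw [eLpNorm_one_eq_lintegral_enorm]
      refine (norm_integral_le_lintegral_norm _).trans (le_of_eq ?_)
      congr 1
      exact lintegral_congr fun t => ofReal_norm_eq_enorm _
    have h2 : eLpNorm (⇑g) 1 (m.restrict (S i)) ≤
        eLpNorm (⇑g) (ENNReal.ofReal p') (m.restrict (S i)) * (m (S i)) ^ (1/p) := by
      have := eLpNorm_le_eLpNorm_mul_rpow_measure_univ (p := 1) (q := ENNReal.ofReal p')
        (μ := m.restrict (S i)) (f := ⇑g) (Fact.out : 1 ≤ ENNReal.ofReal p')
        ((Lp.aestronglyMeasurable g).restrict)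
      rwa [Measure.restrict_apply_univ, ENNReal.toReal_one, hqr, div_one,
        show 1 - 1/p' = 1/p by
          have := hpp'.inv_add_inv_eq_one
          rw [one_div, one_div]; linarith] at this
    have hfin1 : eLpNorm (⇑g) (ENNReal.ofReal p') (m.restrict (S i)) ≠ ∞ :=
      ((Lp.memLp g).restrict (S i)).eLpNorm_ne_top
    have hfin2 : (eLpNorm (⇑g) (ENNReal.ofReal p') (m.restrict (S i)) * (m (S i)) ^ (1/p)) ≠ ∞ :=
      (ENNReal.mul_lt_top hfin1.lt_top
        (ENNReal.rpow_lt_top_of_nonneg hpp'.one_div_nonneg (hSfin i).ne)).ne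
    have h3 : ‖∫ t in S i, (g : Ω → ℂ) t ∂m‖ ≤
        (eLpNorm (⇑g) (ENNReal.ofReal p') (m.restrict (S i))).toReal * (m (S i)).toReal ^ (1/p) := by
      refine (h1.trans (ENNReal.toReal_mono hfin2 h2)).trans (le_of_eq ?_)
      rw [ENNReal.toReal_mul, ← ENNReal.toReal_rpow]
    -- multiply by the negative power
    have h4 : ‖(((m (S i)).toReal ^ (-(1/p)) : ℝ) : ℂ) * ∫ t in S i, (g : Ω → ℂ) t ∂m‖
        ≤ (eLpNorm (⇑g) (ENNReal.ofReal p') (m.restrict (S i))).toReal := by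
      rw [norm_mul, Complex.norm_real, Real.norm_eq_abs,
        abs_of_nonneg (Real.rpow_nonneg hSpos.le _)]
      calc (m (S i)).toReal ^ (-(1/p)) * ‖∫ t in S i, (g : Ω → ℂ) t ∂m‖
          ≤ (m (S i)).toReal ^ (-(1/p)) *
            ((eLpNorm (⇑g) (ENNReal.ofReal p') (m.restrict (S i))).toReal * (m (S i)).toReal ^ (1/p)) := by
            exact mul_le_mul_of_nonneg_left h3 (Real.rpow_nonneg hSpos.le _)
        _ = (eLpNorm (⇑g) (ENNReal.ofReal p') (m.restrict (S i))).toReal := by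
            rw [mul_comm ((eLpNorm (⇑g) (ENNReal.ofReal p') (m.restrict (S i))).toReal), ← mul_assoc,
              ← Real.rpow_add hSpos, neg_add_cancel, Real.rpow_zero, one_mul]
    refine (Real.rpow_le_rpow (norm_nonneg _) h4 hp'0.le).trans (le_of_eq ?_)
    rw [eLpNorm_eq_lintegral_rpow_enorm_toReal hq0 hqt, hqr, ← ENNReal.toReal_rpow,
      ← Real.rpow_mul ENNReal.toReal_nonneg, one_div, inv_mul_cancel₀ hp'0.ne',
      Real.rpow_one]
    rfl
  -- sum over disjoint sets
  have hsum : ∑ i, (∫⁻ t in S i, (‖(g : Ω → ℂ) t‖₊ : ℝ≥0∞) ^ p' ∂m).toReal ≤ ‖g‖ ^ p' := by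
    have hfin : ∀ i, (∫⁻ t in S i, (‖(g : Ω → ℂ) t‖₊ : ℝ≥0∞) ^ p' ∂m) ≠ ∞ := by
      intro i
      refine (lt_of_le_of_lt (setLIntegral_le_lintegral _ _) ?_).ne
      have := Lp.eLpNorm_lt_top g
      rw [eLpNorm_eq_lintegral_rpow_enorm_toReal hq0 hqt, hqr] at this
      exact (ENNReal.rpow_lt_top_iff_of_pos (by positivity : (0:ℝ) < 1/p')).1 this
    rw [← ENNReal.toReal_sum fun i _ => hfin i]
    have hunion : ∑ i, (∫⁻ t in S i, (‖(g : Ω → ℂ) t‖₊ : ℝ≥0∞) ^ p' ∂m)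
        = ∫⁻ t in ⋃ i ∈ Finset.univ, S i, (‖(g : Ω → ℂ) t‖₊ : ℝ≥0∞) ^ p' ∂m := by
      rw [lintegral_biUnion_finset ?_ (fun i _ => hSm i)]
      · intro i _ j _ hij; exact hSd hij
    rw [hunion]
    have hle : (∫⁻ t in ⋃ i ∈ Finset.univ, S i, (‖(g : Ω → ℂ) t‖₊ : ℝ≥0∞) ^ p' ∂m)
        ≤ ∫⁻ t, (‖(g : Ω → ℂ) t‖₊ : ℝ≥0∞) ^ p' ∂m := setLIntegral_le_lintegral _ _
    have hfin' : (∫⁻ t, (‖(g : Ω → ℂ) t‖₊ : ℝ≥0∞) ^ p' ∂m) ≠ ∞ := by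
      have := Lp.eLpNorm_lt_top g
      rw [eLpNorm_eq_lintegral_rpow_enorm_toReal hq0 hqt, hqr] at this
      exact ((ENNReal.rpow_lt_top_iff_of_pos (by positivity : (0:ℝ) < 1/p')).1 this).ne
    refine (ENNReal.toReal_mono hfin' hle).trans (le_of_eq ?_)
    rw [Lp.norm_def, eLpNorm_eq_lintegral_rpow_enorm_toReal hq0 hqt, hqr, ← ENNReal.toReal_rpow,
      ← Real.rpow_mul ENNReal.toReal_nonneg, one_div, inv_mul_cancel₀ hp'0.ne',
      Real.rpow_one]
    rfl
  exact (Finset.sum_le_sum fun i _ => hterm i).trans hsum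

end Fwd

section Fwd2
variable {Ω : Type*} [MeasurableSpace Ω] {m : Measure Ω}
  {p p' : ℝ} (hp : 1 < p) (hpp' : p.HolderConjugate p')
  [Fact (1 ≤ ENNReal.ofReal p')]
  {X : Type*} [NormedAddCommGroup X] [NormedSpace ℂ X] [CompleteSpace X]
  {n : ℕ} {S : Fin n → Set Ω} (hSm : ∀ i, MeasurableSet (S i))
  (hSd : Pairwise (Function.onFun Disjoint S))
  (hS0 : ∀ i, 0 < m (S i)) (hSfin : ∀ i, m (S i) < ⊤) (x : Fin n → X)

include hpp' hSm hSd hS0 hSfin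

lemma forward_exists
    (hx : ∀ l : StrongDual ℂ X, ‖l‖ ≤ 1 → (∑ i, ‖l (x i)‖ ^ p) ^ (1/p) ≤ 1) :
    ∃ (U : Lp ℂ (ENNReal.ofReal p') m →L[ℂ] X)
      (f : Fin n → Lp ℂ (ENNReal.ofReal p') m),
      ‖U‖ ≤ 1 ∧ (∀ i, ‖f i‖ ≤ 1) ∧
      (∀ i j, i ≠ j → (fun t => (f i : Ω → ℂ) t * (f j : Ω → ℂ) t) =ᵐ[m] 0) ∧
      (∀ i, x i = U (f i)) := by
  have hp0 : 0 < p := hpp'.pos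
  have hp'1 : 1 < p' := hpp'.symm.lt
  have hp'0 : 0 < p' := lt_trans one_pos hp'1
  have hq0 : ENNReal.ofReal p' ≠ 0 := by simp [ENNReal.ofReal_eq_zero, not_le, hp'0]
  have hqt : ENNReal.ofReal p' ≠ ∞ := ENNReal.ofReal_ne_top
  have hqr : (ENNReal.ofReal p').toReal = p' := ENNReal.toReal_ofReal hp'0.le
  have hconj : 1/p + 1/p' = 1 := by
    have := hpp'.inv_add_inv_eq_one; rw [one_div, one_div]; linarith
  have hint : ∀ (g : Lp ℂ (ENNReal.ofReal p') m) i, Integrable (⇑g) (m.restrict (S i)) := by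
    intro g i
    haveI : IsFiniteMeasure (m.restrict (S i)) :=
      ⟨by rw [Measure.restrict_apply_univ]; exact hSfin i⟩
    exact ((Lp.memLp g).restrict (S i)).integrable Fact.out
  -- the linear map
  set T : Lp ℂ (ENNReal.ofReal p') m →ₗ[ℂ] X :=
    { toFun := fun g => ∑ i,
        ((((m (S i)).toReal ^ (-(1/p)) : ℝ) : ℂ) * ∫ t in S i, (g : Ω → ℂ) t ∂m) • x i
      map_add' := by
        intro g h
        rw [← Finset.sum_add_distrib]
        refine Finset.sum_congr rfl fun i _ => ?_
        have : (∫ t in S i, ((g + h : Lp ℂ (ENNReal.ofReal p') m) : Ω → ℂ) t ∂m)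
            = (∫ t in S i, (g : Ω → ℂ) t ∂m) + ∫ t in S i, (h : Ω → ℂ) t ∂m := by
          rw [← integral_add (hint g i) (hint h i)]
          refine integral_congr_ae (ae_restrict_of_ae ?_)
          filter_upwards [Lp.coeFn_add g h] with t ht
          exact ht
        rw [this, mul_add, add_smul]
      map_smul' := by
        intro c g
        simp only [RingHom.id_apply]
        rw [Finset.smul_sum]
        refine Finset.sum_congr rfl fun i _ => ?_
        have : (∫ t in S i, ((c • g : Lp ℂ (ENNReal.ofReal p') m) : Ω → ℂ) t ∂m)
            = c * ∫ t in S i, (g : Ω → ℂ) t ∂m := by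
          rw [← smul_eq_mul, ← integral_smul]
          refine integral_congr_ae (ae_restrict_of_ae ?_)
          filter_upwards [Lp.coeFn_smul c g] with t ht
          exact ht
        rw [this, smul_smul]
        ring_nf } with hT
  -- first dual factor bound
  have hfac : ∀ l : StrongDual ℂ X, (∑ i, ‖l (x i)‖ ^ p) ^ (1/p) ≤ ‖l‖ := by
    intro l
    rcases eq_or_ne l 0 with rfl | hl
    · simp only [ContinuousLinearMap.zero_apply, norm_zero, norm_zero,
        Real.zero_rpow hp0.ne', Finset.sum_const, smul_zero]
      rw [Real.zero_rpow (by positivity : 1/p ≠ 0)]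
    · have hnl : 0 < ‖l‖ := norm_pos_iff.2 hl
      have h1 : ‖(‖l‖⁻¹ • l : StrongDual ℂ X)‖ ≤ 1 := by
        rw [norm_smul, norm_inv, norm_norm, inv_mul_cancel₀ hnl.ne']
      have h2 := hx _ h1
      have h3 : (∑ i, ‖(‖l‖⁻¹ • l : StrongDual ℂ X) (x i)‖ ^ p) ^ (1/p)
          = ‖l‖⁻¹ * (∑ i, ‖l (x i)‖ ^ p) ^ (1/p) := by
        have : ∀ i, ‖(‖l‖⁻¹ • l : StrongDual ℂ X) (x i)‖ ^ p
            = ‖l‖⁻¹ ^ p * ‖l (x i)‖ ^ p := by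
          intro i
          rw [ContinuousLinearMap.smul_apply, norm_smul, norm_inv, norm_norm,
            Real.mul_rpow (by positivity) (norm_nonneg _)]
        simp_rw [this]
        rw [← Finset.mul_sum, Real.mul_rpow (by positivity)
          (Finset.sum_nonneg fun i _ => by positivity),
          ← Real.rpow_mul (by positivity), mul_one_div, div_self hp0.ne', Real.rpow_one]
      rw [h3] at h2
      calc (∑ i, ‖l (x i)‖ ^ p) ^ (1/p)
          = ‖l‖ * (‖l‖⁻¹ * (∑ i, ‖l (x i)‖ ^ p) ^ (1/p)) := by
            rw [← mul_assoc, mul_inv_cancel₀ hnl.ne', one_mul]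
        _ ≤ ‖l‖ * 1 := by gcongr
        _ = ‖l‖ := mul_one _
  -- operator bound
  have hbound : ∀ g : Lp ℂ (ENNReal.ofReal p') m, ‖T g‖ ≤ 1 * ‖g‖ := by
    intro g
    rw [one_mul]
    refine norm_le_dual_bound ℂ _ (norm_nonneg g) fun l => ?_
    have expand : l (T g) = ∑ i,
        ((((m (S i)).toReal ^ (-(1/p)) : ℝ) : ℂ) * ∫ t in S i, (g : Ω → ℂ) t ∂m) * l (x i) := by
      rw [hT]
      simp only [LinearMap.coe_mk, AddHom.coe_mk, map_sum, _root_.map_smul, smul_eq_mul]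
    rw [expand]
    calc ‖∑ i, ((((m (S i)).toReal ^ (-(1/p)) : ℝ) : ℂ) * ∫ t in S i, (g : Ω → ℂ) t ∂m) * l (x i)‖
        ≤ ∑ i, ‖(((m (S i)).toReal ^ (-(1/p)) : ℝ) : ℂ) * ∫ t in S i, (g : Ω → ℂ) t ∂m‖ * ‖l (x i)‖ := by
          refine (norm_sum_le _ _).trans (le_of_eq ?_)
          exact Finset.sum_congr rfl fun i _ => norm_mul _ _
      _ = ∑ i, ‖l (x i)‖ * ‖(((m (S i)).toReal ^ (-(1/p)) : ℝ) : ℂ) * ∫ t in S i, (g : Ω → ℂ) t ∂m‖ := by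
          exact Finset.sum_congr rfl fun i _ => mul_comm _ _
      _ ≤ (∑ i, ‖l (x i)‖ ^ p) ^ (1/p) *
          (∑ i, ‖(((m (S i)).toReal ^ (-(1/p)) : ℝ) : ℂ) * ∫ t in S i, (g : Ω → ℂ) t ∂m‖ ^ p') ^ (1/p') :=
          Real.inner_le_Lp_mul_Lq_of_nonneg _ hpp' (fun i _ => norm_nonneg _)
            (fun i _ => norm_nonneg _)
      _ ≤ ‖l‖ * ‖g‖ := by
          refine mul_le_mul (hfac l) ?_ (Real.rpow_nonneg
            (Finset.sum_nonneg fun i _ => by positivity) _) (norm_nonneg l)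
          have := key_coef_bound hpp' hSm hSd hS0 hSfin g
          calc (∑ i, ‖(((m (S i)).toReal ^ (-(1/p)) : ℝ) : ℂ) * ∫ t in S i, (g : Ω → ℂ) t ∂m‖ ^ p') ^ (1/p')
              ≤ (‖g‖ ^ p') ^ (1/p') :=
                Real.rpow_le_rpow (Finset.sum_nonneg fun i _ => by positivity) this
                  (by positivity)
            _ = ‖g‖ := by
                rw [← Real.rpow_mul (norm_nonneg g), mul_one_div, div_self hp'0.ne',
                  Real.rpow_one]
      _ = ‖g‖ * ‖l‖ := mul_comm _ _
  refine ⟨T.mkContinuous 1 hbound,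
    fun i => indicatorConstLp (ENNReal.ofReal p') (hSm i) (hSfin i).ne
      ((((m (S i)).toReal ^ (-(1/p')) : ℝ)) : ℂ), ?_, ?_, ?_, ?_⟩
  · exact T.mkContinuous_norm_le zero_le_one hbound
  · intro i
    have hSpos : 0 < (m (S i)).toReal := ENNReal.toReal_pos (hS0 i).ne' (hSfin i).ne
    rw [norm_indicatorConstLp hq0 hqt, hqr, measureReal_def, Complex.norm_real, Real.norm_eq_abs,
      abs_of_nonneg (Real.rpow_nonneg hSpos.le _), ← Real.rpow_add hSpos,
      neg_add_cancel, Real.rpow_zero]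
  · intro i j hij
    filter_upwards [indicatorConstLp_coeFn (p := ENNReal.ofReal p') (hs := hSm i)
        (hμs := (hSfin i).ne) (c := ((((m (S i)).toReal ^ (-(1/p')) : ℝ)) : ℂ)),
      indicatorConstLp_coeFn (p := ENNReal.ofReal p') (hs := hSm j)
        (hμs := (hSfin j).ne) (c := ((((m (S j)).toReal ^ (-(1/p')) : ℝ)) : ℂ))] with t h1 h2
    rw [h1, h2]
    by_cases ht : t ∈ S i
    · have : t ∉ S j := Set.disjoint_left.1 (hSd hij) ht
      simp [Set.indicator_of_notMem this]
    · simp [Set.indicator_of_notMem ht]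
  · intro i
    have hSpos : 0 < (m (S i)).toReal := ENNReal.toReal_pos (hS0 i).ne' (hSfin i).ne
    rw [LinearMap.mkContinuous_apply, hT]
    simp only [LinearMap.coe_mk, AddHom.coe_mk]
    have hji : ∀ j, (∫ t in S j,
        ((indicatorConstLp (ENNReal.ofReal p') (hSm i) (hSfin i).ne
          ((((m (S i)).toReal ^ (-(1/p')) : ℝ)) : ℂ) : Lp ℂ (ENNReal.ofReal p') m) : Ω → ℂ) t ∂m)
        = (m (S i ∩ S j)).toReal • ((((m (S i)).toReal ^ (-(1/p')) : ℝ)) : ℂ) := by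
      intro j
      exact setIntegral_indicatorConstLp (hSm j) (hSm i) (hSfin i).ne _
    rw [Finset.sum_eq_single i]
    · rw [hji i, Set.inter_self]
      have hcoef : (((m (S i)).toReal ^ (-(1/p)) : ℝ) : ℂ) *
          ((m (S i)).toReal • ((((m (S i)).toReal ^ (-(1/p')) : ℝ)) : ℂ)) = 1 := by
        rw [Complex.real_smul]
        push_cast
        rw [← Complex.ofReal_mul, ← Complex.ofReal_mul]
        norm_cast
        rw [show (m (S i)).toReal * (m (S i)).toReal ^ (-(1/p'))
            = (m (S i)).toReal ^ (1 + -(1/p')) by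
              rw [Real.rpow_add hSpos, Real.rpow_one],
          ← Real.rpow_add hSpos, show -(1/p) + (1 + -(1/p')) = 0 by linarith, Real.rpow_zero]
      rw [hcoef, one_smul]
    · intro j _ hji'
      rw [hji j, Set.disjoint_iff_inter_eq_empty.1 (hSd (Ne.symm hji'))]
      simp
    · simp
end Fwd2

set_option maxHeartbeats 1000000 in
/-- let `1 < p < ∞` with conjugate exponent `p'`, let `X` be a complex Banach
space, and let `(Ω, m)` contain pairwise disjoint measurable sets `S_1,…,S_n` of finite
positive measure.  Then for `x ∈ X^n`, `μ_{p,n}(x) ≤ 1` if and only if there are a bounded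
linear operator `U : L^{p'}(Ω,m) → X` of norm at most `1` and functions
`f_1,…,f_n ∈ L^{p'}(Ω,m)` of norm at most `1`, with pairwise almost everywhere disjoint
supports (`f_i · f_j = 0` a.e. for `i ≠ j`), such that `x_i = U(f_i)` for each `i`. -/
theorem stmt8 {Ω : Type*} [MeasurableSpace Ω] (m : Measure Ω)
    (p p' : ℝ) (hp : 1 < p) (hpp' : p.HolderConjugate p')
    [Fact (1 ≤ ENNReal.ofReal p')]
    (X : Type*) [NormedAddCommGroup X] [NormedSpace ℂ X] [CompleteSpace X]
    (n : ℕ) (S : Fin n → Set Ω) (hSm : ∀ i, MeasurableSet (S i))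
    (hSd : Pairwise (Function.onFun Disjoint S))
    (hS0 : ∀ i, 0 < m (S i)) (hSfin : ∀ i, m (S i) < ⊤)
    (x : Fin n → X) :
    muP p x ≤ 1 ↔
      ∃ (U : Lp ℂ (ENNReal.ofReal p') m →L[ℂ] X)
        (f : Fin n → Lp ℂ (ENNReal.ofReal p') m),
        ‖U‖ ≤ 1 ∧ (∀ i, ‖f i‖ ≤ 1) ∧
        (∀ i j, i ≠ j → (fun t => (f i : Ω → ℂ) t * (f j : Ω → ℂ) t) =ᵐ[m] 0) ∧
        (∀ i, x i = U (f i)) := by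
  have hp0 : 0 < p := lt_trans one_pos hp
  have hp'1 : 1 < p' := hpp'.symm.lt
  have hp'0 : 0 < p' := lt_trans one_pos hp'1
  have hq0' : ENNReal.ofReal p' ≠ 0 := by simp [ENNReal.ofReal_eq_zero, not_le, hp'0]
  have hqt' : ENNReal.ofReal p' ≠ ∞ := ENNReal.ofReal_ne_top
  rw [muP_le_one_iff hp0]
  constructor
  · intro hx
    exact forward_exists hpp' hSm hSd hS0 hSfin x hx
  · rintro ⟨U, f, hU, hf, hdisj, hxU⟩ l hl
    have hnds := fun d : Fin n → ℂ =>
      norm_disjoint_sum (q := ENNReal.ofReal p') hq0' hqt' f hdisj d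
    have hp0 : 0 < p := hpp'.pos
    have hp'1 : 1 < p' := hpp'.symm.lt
    have hp'0 : 0 < p' := lt_trans one_pos hp'1
    have hqr : (ENNReal.ofReal p').toReal = p' := ENNReal.toReal_ofReal hp'0.le
    have hconj : 1/p + 1/p' = 1 := by
      have := hpp'.inv_add_inv_eq_one; rw [one_div, one_div]; linarith
    set b : Fin n → ℝ := fun i => ‖l (x i)‖ with hb
    have hbnn : ∀ i, 0 ≤ b i := fun i => norm_nonneg _
    set B : ℝ := ∑ i, b i ^ p with hB
    have hBnn : 0 ≤ B := Finset.sum_nonneg fun i _ => Real.rpow_nonneg (hbnn i) _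
    rcases eq_or_lt_of_le hBnn with hB0 | hBpos
    · rw [← hB0, Real.zero_rpow (by positivity : 1/p ≠ 0)]; exact zero_le_one
    · -- main case
      set a : Fin n → ℝ := fun i => b i ^ (p-1) / B ^ (1/p') with ha
      have hann : ∀ i, 0 ≤ a i := fun i => div_nonneg (Real.rpow_nonneg (hbnn i) _)
        (Real.rpow_nonneg hBnn _)
      set w : Fin n → ℂ := fun i => l (U (f i)) with hw
      have hbw : ∀ i, b i = ‖w i‖ := fun i => by simp only [hb, hw, ← hxU i]
      set d : Fin n → ℂ := fun i =>
        if w i = 0 then 0 else (a i : ℂ) * ((starRingEnd ℂ) (w i) / ‖w i‖) with hd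
      have hdnorm : ∀ i, ‖d i‖ ≤ a i := by
        intro i
        rw [hd]
        by_cases hwi : w i = 0
        · simp [hwi, hann i]
        · simp only [hwi, if_false]
          rw [norm_mul, norm_div, RCLike.norm_conj, Complex.norm_real, Real.norm_eq_abs,
            abs_of_nonneg (hann i), Complex.norm_real, Real.norm_eq_abs, abs_norm,
            div_self (norm_ne_zero_iff.2 hwi), mul_one]
      have hdw : ∀ i, d i * w i = ((a i * b i : ℝ) : ℂ) := by
        intro i
        rw [hd]
        by_cases hwi : w i = 0
        · simp [hwi, hbw i]
        · simp only [hwi, if_false]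
          rw [hbw i]
          have habs : ‖w i‖ ≠ 0 := by
            simpa using (norm_ne_zero_iff.2 hwi : ‖w i‖ ≠ 0)
          push_cast
          field_simp
          rw [mul_assoc, mul_comm ((starRingEnd ℂ) (w i)) (w i), Complex.mul_conj,
            Complex.normSq_eq_norm_sq]
          have habs' : ((‖w i‖ : ℝ) : ℂ) ≠ 0 := by exact_mod_cast habs
          field_simp
          push_cast
          ring
      -- the combination
      set g : Lp ℂ (ENNReal.ofReal p') m := ∑ i, d i • f i with hg
      have hlUg : l (U g) = ((∑ i, a i * b i : ℝ) : ℂ) := by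
        rw [hg]
        rw [map_sum, map_sum]
        push_cast
        refine Finset.sum_congr rfl fun i _ => ?_
        rw [_root_.map_smul, _root_.map_smul, smul_eq_mul]
        exact (hdw i).trans (by push_cast; ring)
      have hsum_ab : ∑ i, a i * b i ≤ ‖g‖ := by
        have h1 : ‖l (U g)‖ ≤ ‖g‖ := by
          calc ‖l (U g)‖ ≤ ‖l‖ * ‖U g‖ := l.le_opNorm _
            _ ≤ 1 * (1 * ‖g‖) := by
                refine mul_le_mul hl ?_ (norm_nonneg _) zero_le_one
                calc ‖U g‖ ≤ ‖U‖ * ‖g‖ := U.le_opNorm _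
                  _ ≤ 1 * ‖g‖ := by gcongr
            _ = ‖g‖ := by ring
        rw [hlUg] at h1
        rw [Complex.norm_real, Real.norm_eq_abs,
          abs_of_nonneg (Finset.sum_nonneg fun i _ => mul_nonneg (hann i) (hbnn i))] at h1
        exact h1
      have hgnorm : ‖g‖ ≤ 1 := by
        have h2 := hnds d
        rw [hqr] at h2
        have h3 : ∑ i, ‖d i‖ ^ p' * ‖f i‖ ^ p' ≤ ∑ i, a i ^ p' := by
          refine Finset.sum_le_sum fun i _ => ?_
          calc ‖d i‖ ^ p' * ‖f i‖ ^ p' ≤ a i ^ p' * 1 := by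
                refine mul_le_mul ?_ ?_ (by positivity) (by positivity)
                · exact Real.rpow_le_rpow (norm_nonneg _) (hdnorm i) hp'0.le
                · exact Real.rpow_le_one (norm_nonneg _) (hf i) hp'0.le
            _ = a i ^ p' := mul_one _
        have h4 : ∑ i, a i ^ p' = 1 := by
          have : ∀ i, a i ^ p' = b i ^ p / B := by
            intro i
            rw [ha]
            rw [Real.div_rpow (Real.rpow_nonneg (hbnn i) _) (Real.rpow_nonneg hBnn _),
              ← Real.rpow_mul (hbnn i), hpp'.sub_one_mul_conj,
              ← Real.rpow_mul hBnn, one_div, inv_mul_cancel₀ hp'0.ne', Real.rpow_one]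
          simp_rw [this]
          rw [← Finset.sum_div, ← hB, div_self hBpos.ne']
        have h5 : ‖g‖ ^ p' ≤ 1 := by
          rw [← h4]
          exact h2.trans h3
        -- conclude ‖g‖ ≤ 1
        by_contra hc
        push_neg at hc
        have : (1:ℝ) < ‖g‖ ^ p' := Real.one_lt_rpow_iff_of_pos (lt_trans zero_lt_one hc) |>.2
          (Or.inl ⟨hc, hp'0⟩)
        linarith
      -- compute ∑ a i * b i = B ^ (1/p)
      have hab : ∑ i, a i * b i = B ^ (1/p) := by
        have : ∀ i, a i * b i = b i ^ p / B ^ (1/p') := by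
          intro i
          show b i ^ (p - 1) / B ^ (1/p') * b i = b i ^ p / B ^ (1/p')
          rcases eq_or_lt_of_le (hbnn i) with hbi | hbi
          · rw [← hbi, Real.zero_rpow (by linarith : p - 1 ≠ 0),
              Real.zero_rpow hp0.ne', zero_div, mul_zero]
          · rw [div_mul_eq_mul_div, ← Real.rpow_add_one hbi.ne', sub_add_cancel]
        simp_rw [this]
        rw [← Finset.sum_div, ← hB]
        rw [show (1:ℝ)/p = 1 - 1/p' by linarith, Real.rpow_sub hBpos, Real.rpow_one]
      rw [hab] at hsum_ab
      exact hsum_ab.trans hgnorm
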